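/- Let H be a cocommutative Hopf algebra and F ∈ H⊗H an invertible twist satisfying the cocycle equation and counit conditions. Then R = F₂₁·F⁻¹ satisfies the quantum Yang–Baxter equation R₁₂R₁₃R₂₃ = R₂₃R₁₃R₁₂ in H⊗H⊗H. -/

import Mathlib

open TensorProduct

noncomputable section TwistAux
variable (R : Type*) [CommRing R] (H : Type*) [Ring H] [HopfAlgebra R H]

def i12 : H ⊗[R] H →ₐ[R] H ⊗[R] (H ⊗[R] H) :=
  (Algebra.TensorProduct.assoc R R R H H H).toAlgHom.comp Algebra.TensorProduct.includeLeft

def i23 : H ⊗[R] H →ₐ[R] H ⊗[R] (H ⊗[R] H) := Algebra.TensorProduct.includeRight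

def i13 : H ⊗[R] H →ₐ[R] H ⊗[R] (H ⊗[R] H) :=
  Algebra.TensorProduct.map (AlgHom.id R H) Algebra.TensorProduct.includeRight

def d12 : H ⊗[R] H →ₐ[R] H ⊗[R] (H ⊗[R] H) :=
  (Algebra.TensorProduct.assoc R R R H H H).toAlgHom.comp
    (Algebra.TensorProduct.map (Bialgebra.comulAlgHom R H) (AlgHom.id R H))

def d23 : H ⊗[R] H →ₐ[R] H ⊗[R] (H ⊗[R] H) :=
  Algebra.TensorProduct.map (AlgHom.id R H) (Bialgebra.comulAlgHom R H)

def pC : H ⊗[R] (H ⊗[R] H) ≃ₐ[R] H ⊗[R] (H ⊗[R] H) :=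
  (Algebra.TensorProduct.comm R H (H ⊗[R] H)).trans (Algebra.TensorProduct.assoc R R R H H H)

def s23 : H ⊗[R] (H ⊗[R] H) ≃ₐ[R] H ⊗[R] (H ⊗[R] H) :=
  Algebra.TensorProduct.congr AlgEquiv.refl (Algebra.TensorProduct.comm R H H)

def s12 : H ⊗[R] (H ⊗[R] H) ≃ₐ[R] H ⊗[R] (H ⊗[R] H) :=
  ((Algebra.TensorProduct.assoc R R R H H H).symm.trans
    (Algebra.TensorProduct.congr (Algebra.TensorProduct.comm R H H) AlgEquiv.refl)).trans
    (Algebra.TensorProduct.assoc R R R H H H)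

variable {R H}

local notation "τ" => Algebra.TensorProduct.comm R H H

@[simp] lemma i12_tmul (x y : H) : i12 R H (x ⊗ₜ y) = x ⊗ₜ (y ⊗ₜ 1) := by simp [i12]
@[simp] lemma i23_tmul (x y : H) : i23 R H (x ⊗ₜ y) = (1:H) ⊗ₜ (x ⊗ₜ y) := by
  simp [i23, Algebra.TensorProduct.includeRight_apply]
@[simp] lemma i13_tmul (x y : H) : i13 R H (x ⊗ₜ y) = x ⊗ₜ ((1:H) ⊗ₜ y) := by simp [i13]
@[simp] lemma pC_tmul (x y z : H) : pC R H (x ⊗ₜ (y ⊗ₜ z)) = y ⊗ₜ (z ⊗ₜ x) := by simp [pC]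
@[simp] lemma s23_tmul (x y z : H) : s23 R H (x ⊗ₜ (y ⊗ₜ z)) = x ⊗ₜ (z ⊗ₜ y) := by simp [s23]
@[simp] lemma s12_tmul (x y z : H) : s12 R H (x ⊗ₜ (y ⊗ₜ z)) = y ⊗ₜ (x ⊗ₜ z) := by simp [s12]

lemma i23_app (w : H ⊗[R] H) : i23 R H w = (1:H) ⊗ₜ w := rfl

lemma i12_app (w : H ⊗[R] H) :
    i12 R H w = (Algebra.TensorProduct.assoc R R R H H H) (w ⊗ₜ (1:H)) := by
  simp [i12]

lemma d12_l (x : H) : d12 R H (x ⊗ₜ (1:H)) = i12 R H (Coalgebra.comul x) := by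
  simp [d12, i12]

lemma d12_r (y : H) : d12 R H ((1:H) ⊗ₜ y) = (1:H) ⊗ₜ ((1:H) ⊗ₜ y) := by
  simp [d12, Algebra.TensorProduct.one_def]

lemma d23_l (x : H) : d23 R H (x ⊗ₜ (1:H)) = x ⊗ₜ ((1:H) ⊗ₜ (1:H)) := by
  simp [d23, Algebra.TensorProduct.one_def]

lemma d23_r (y : H) : d23 R H ((1:H) ⊗ₜ y) = i23 R H (Coalgebra.comul y) := by
  simp [d23, i23_app]

lemma P1 (w : H ⊗[R] H) : pC R H (i12 R H w) = i13 R H (τ w) := by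
  have : (pC R H).toAlgHom.comp (i12 R H) = (i13 R H).comp (τ).toAlgHom := by
    ext x <;> simp
  exact AlgHom.congr_fun this w

lemma P2 (w : H ⊗[R] H) : pC R H (i23 R H w) = i12 R H w := by
  have : (pC R H).toAlgHom.comp (i23 R H) = i12 R H := by
    ext x <;> simp [Algebra.TensorProduct.one_def]
  exact AlgHom.congr_fun this w

lemma S4 (w : H ⊗[R] H) : s23 R H (i12 R H w) = i13 R H w := by
  have : (s23 R H).toAlgHom.comp (i12 R H) = i13 R H := by
    ext x <;> simp
  exact AlgHom.congr_fun this w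

lemma S5 (w : H ⊗[R] H) : s23 R H (i23 R H w) = i23 R H (τ w) := by
  have : (s23 R H).toAlgHom.comp (i23 R H) = (i23 R H).comp (τ).toAlgHom := by
    ext x <;> simp [Algebra.TensorProduct.one_def]
  exact AlgHom.congr_fun this w

lemma S6 (w : H ⊗[R] H) : s12 R H (i12 R H w) = i12 R H (τ w) := by
  have : (s12 R H).toAlgHom.comp (i12 R H) = (i12 R H).comp (τ).toAlgHom := by
    ext x <;> simp
  exact AlgHom.congr_fun this w

lemma S7 (w : H ⊗[R] H) : s12 R H (i13 R H w) = i23 R H w := by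
  have : (s12 R H).toAlgHom.comp (i13 R H) = i23 R H := by
    ext x <;> simp [Algebra.TensorProduct.one_def]
  exact AlgHom.congr_fun this w

lemma S8 (w : H ⊗[R] H) : s12 R H (i23 R H w) = i13 R H w := by
  have : (s12 R H).toAlgHom.comp (i23 R H) = i13 R H := by
    ext x <;> simp [Algebra.TensorProduct.one_def]
  exact AlgHom.congr_fun this w

lemma P3 (w : H ⊗[R] H) : pC R H (d23 R H w) = d12 R H (τ w) := by
  have : (pC R H).toAlgHom.comp (d23 R H) = (d12 R H).comp (τ).toAlgHom := by
    ext x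
    · simp [d23_l, d12_r, Algebra.TensorProduct.one_def]
    · simp only [AlgHom.restrictScalars_apply, AlgHom.comp_apply,
        AlgEquiv.toAlgHom_eq_coe, AlgEquiv.coe_toAlgHom, AlgHom.coe_coe, Algebra.TensorProduct.includeRight_apply]
      rw [d23_r, P2, Algebra.TensorProduct.comm_tmul, d12_l]
  exact AlgHom.congr_fun this w


lemma comm_eq (z : H ⊗[R] H) : (τ) z = (TensorProduct.comm R H H) z := rfl

section cocomm
variable (hcc : ∀ x : H, (TensorProduct.comm R H H) (Coalgebra.comul x) = Coalgebra.comul x)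
include hcc

lemma C9 (w : H ⊗[R] H) : pC R H (d12 R H w) = s23 R H (d12 R H w) := by
  have : (pC R H).toAlgHom.comp (d12 R H) = (s23 R H).toAlgHom.comp (d12 R H) := by
    ext x
    · simp only [AlgHom.restrictScalars_apply, AlgHom.comp_apply,
        AlgEquiv.toAlgHom_eq_coe, AlgEquiv.coe_toAlgHom, AlgHom.coe_coe, Algebra.TensorProduct.includeLeft_apply]
      rw [d12_l, P1, S4, comm_eq, hcc]
    · simp only [AlgHom.restrictScalars_apply, AlgHom.comp_apply,
        AlgEquiv.toAlgHom_eq_coe, AlgEquiv.coe_toAlgHom, AlgHom.coe_coe, Algebra.TensorProduct.includeRight_apply]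
      rw [d12_r] ; simp
  exact AlgHom.congr_fun this w

lemma C10 (w : H ⊗[R] H) : s23 R H (d23 R H w) = d23 R H w := by
  have : (s23 R H).toAlgHom.comp (d23 R H) = d23 R H := by
    ext x
    · simp only [AlgHom.restrictScalars_apply, AlgHom.comp_apply,
        AlgEquiv.toAlgHom_eq_coe, AlgEquiv.coe_toAlgHom, AlgHom.coe_coe, Algebra.TensorProduct.includeLeft_apply]
      rw [d23_l] ; simp
    · simp only [AlgHom.restrictScalars_apply, AlgHom.comp_apply,
        AlgEquiv.toAlgHom_eq_coe, AlgEquiv.coe_toAlgHom, AlgHom.coe_coe, Algebra.TensorProduct.includeRight_apply]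
      rw [d23_r, S5, comm_eq, hcc]
  exact AlgHom.congr_fun this w

lemma C11 (w : H ⊗[R] H) : s12 R H (d12 R H w) = d12 R H w := by
  have : (s12 R H).toAlgHom.comp (d12 R H) = d12 R H := by
    ext x
    · simp only [AlgHom.restrictScalars_apply, AlgHom.comp_apply,
        AlgEquiv.toAlgHom_eq_coe, AlgEquiv.coe_toAlgHom, AlgHom.coe_coe, Algebra.TensorProduct.includeLeft_apply]
      rw [d12_l, S6, comm_eq, hcc]
    · simp only [AlgHom.restrictScalars_apply, AlgHom.comp_apply,
        AlgEquiv.toAlgHom_eq_coe, AlgEquiv.coe_toAlgHom, AlgHom.coe_coe, Algebra.TensorProduct.includeRight_apply]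
      rw [d12_r] ; simp
  exact AlgHom.congr_fun this w

end cocomm

lemma tr1 (w : H ⊗[R] H) :
    (Algebra.TensorProduct.assoc R R R H H H)
      ((TensorProduct.map Coalgebra.comul LinearMap.id) w) = d12 R H w := by
  induction w using TensorProduct.induction_on with
  | zero => simp
  | tmul x y => simp [d12]
  | add a b ha hb => simp [ha, hb]

lemma tr2 (w : H ⊗[R] H) :
    (TensorProduct.map LinearMap.id Coalgebra.comul) w = d23 R H w := by
  induction w using TensorProduct.induction_on with
  | zero => simp
  | tmul x y => simp [d23]
  | add a b ha hb => simp [ha, hb]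

lemma tr3 (w : H ⊗[R] H) :
    (TensorProduct.map LinearMap.id
      (Algebra.TensorProduct.includeRight (R := R) (A := H) (B := H)).toLinearMap) w
      = i13 R H w := by
  induction w using TensorProduct.induction_on with
  | zero => simp
  | tmul x y => simp [i13]
  | add a b ha hb => rw [map_add, map_add, ha, hb]

lemma comm23 (z : H ⊗[R] H) (y : H) :
    i12 R H z * ((1:H) ⊗ₜ ((1:H) ⊗ₜ y)) = ((1:H) ⊗ₜ ((1:H) ⊗ₜ y)) * i12 R H z := by
  induction z using TensorProduct.induction_on with
  | zero => simp
  | tmul p q => simp [Algebra.TensorProduct.tmul_mul_tmul]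
  | add a b ha hb => simp [add_mul, mul_add, ha, hb]


lemma Rop (F Finv : H ⊗[R] H) (hGF : Finv * F = 1) (c : H ⊗[R] H) :
    (τ) F * Finv * (F * c * Finv) = (τ) F * c * (τ) Finv * ((τ) F * Finv) := by
  have h1 : (τ) Finv * (τ) F = 1 := by rw [← map_mul, hGF, map_one]
  simp only [mul_assoc]
  rw [← mul_assoc Finv F, hGF, one_mul, ← mul_assoc ((τ) Finv), h1, one_mul]

lemma OpL (F Finv : H ⊗[R] H) (hGF : Finv * F = 1) (w : H ⊗[R] H) :
    i12 R H ((τ) F * Finv) * i12 R H F * d12 R H w * i12 R H Finv =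
      i12 R H ((τ) F) * d12 R H w * i12 R H ((τ) Finv) * i12 R H ((τ) F * Finv) := by
  induction w using TensorProduct.induction_on with
  | zero => simp
  | add a b ha hb =>
      simp only [map_add, mul_add, add_mul]
      rw [ha, hb]
  | tmul x y =>
    have hsplit : (x ⊗ₜ[R] y : H ⊗[R] H) = (x ⊗ₜ 1) * ((1:H) ⊗ₜ y) := by
      simp [Algebra.TensorProduct.tmul_mul_tmul]
    rw [hsplit, map_mul (d12 R H) (x ⊗ₜ 1) ((1:H) ⊗ₜ y), d12_l, d12_r]
    set E : H ⊗[R] (H ⊗[R] H) := (1:H) ⊗ₜ ((1:H) ⊗ₜ y) with hE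
    set a := i12 R H ((τ) F * Finv) with ha'
    set f := i12 R H F with hf'
    set c := i12 R H (Coalgebra.comul x) with hc'
    set g := i12 R H Finv with hg'
    set f' := i12 R H ((τ) F) with hf''
    set g' := i12 R H ((τ) Finv) with hg''
    have hca : a * E = E * a := comm23 _ y
    have hcg : g * E = E * g := comm23 _ y
    have hcg' : g' * E = E * g' := comm23 _ y
    have e0 : (τ) F * Finv * (F * (Coalgebra.comul x * Finv)) =
        (τ) F * (Coalgebra.comul x * ((τ) Finv * ((τ) F * Finv))) := by
      have h2 := Rop F Finv hGF (Coalgebra.comul x)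
      simp only [mul_assoc] at h2 ⊢
      exact h2
    have key : a * (f * (c * g)) = f' * (c * (g' * a)) := by
      simp only [ha', hf', hc', hg', hf'', hg'', ← map_mul]
      exact congrArg (i12 R H) e0
    calc a * f * (c * E) * g = a * (f * (c * (E * g))) := by simp only [mul_assoc]
      _ = a * (f * (c * (g * E))) := by rw [← hcg]
      _ = (a * (f * (c * g))) * E := by simp only [mul_assoc]
      _ = (f' * (c * (g' * a))) * E := by rw [key]
      _ = f' * (c * (g' * (a * E))) := by simp only [mul_assoc]
      _ = f' * (c * (g' * (E * a))) := by rw [hca]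
      _ = f' * (c * ((g' * E) * a)) := by simp only [mul_assoc]
      _ = f' * (c * ((E * g') * a)) := by rw [hcg']
      _ = f' * (c * E) * g' * a := by simp only [mul_assoc]

end TwistAux

/-- if `H` is a cocommutative Hopf algebra and `F ∈ H⊗H` an
invertible twist (cocycle equation and counit conditions), then
`R = F₂₁·F⁻¹` satisfies the quantum Yang–Baxter equation
`R₁₂R₁₃R₂₃ = R₂₃R₁₃R₁₂` in `H⊗H⊗H`. -/
theorem twist_rmatrix_qybe {R : Type*} [CommRing R]
    {H : Type*} [Ring H] [HopfAlgebra R H]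
    (hcocomm : ∀ x : H,
      (TensorProduct.comm R H H) (Coalgebra.comul x) = Coalgebra.comul x)
    (F Finv : H ⊗[R] H)
    (hinv : F * Finv = 1 ∧ Finv * F = 1)
    (hcocycle :
      (Algebra.TensorProduct.assoc R R R H H H) (F ⊗ₜ (1:H)) *
          (Algebra.TensorProduct.assoc R R R H H H)
            ((TensorProduct.map Coalgebra.comul LinearMap.id) F) =
        ((1:H) ⊗ₜ F) * (TensorProduct.map LinearMap.id Coalgebra.comul) F)
    (hcounitl : (TensorProduct.lid R H)
      ((TensorProduct.map Coalgebra.counit LinearMap.id) F) = 1)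
    (hcounitr : (TensorProduct.rid R H)
      ((TensorProduct.map LinearMap.id Coalgebra.counit) F) = 1) :
    let Rm : H ⊗[R] H := (TensorProduct.comm R H H) F * Finv
    let R12 : H ⊗[R] (H ⊗[R] H) :=
      (Algebra.TensorProduct.assoc R R R H H H) (Rm ⊗ₜ (1:H))
    let R13 : H ⊗[R] (H ⊗[R] H) :=
      (TensorProduct.map LinearMap.id
        (Algebra.TensorProduct.includeRight (R := R) (A := H) (B := H)).toLinearMap) Rm
    let R23 : H ⊗[R] (H ⊗[R] H) := (1:H) ⊗ₜ Rm
    R12 * R13 * R23 = R23 * R13 * R12 := by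
  intro Rm R12 R13 R23
  obtain ⟨hFG, hGF⟩ := hinv
  have hRm : Rm = Algebra.TensorProduct.comm R H H F * Finv := rfl
  have hR12 : R12 = i12 R H Rm := (i12_app Rm).symm
  have hR13 : R13 = i13 R H Rm := tr3 Rm
  have hR23 : R23 = i23 R H Rm := (i23_app Rm).symm
  rw [hR12, hR13, hR23]
  -- translated cocycle
  have EC : i12 R H F * d12 R H F = i23 R H F * d23 R H F := by
    rw [i12_app, i23_app, ← tr1, ← tr2]
    exact hcocycle
  -- monoid homs
  let fi12 : (H ⊗[R] H) →* (H ⊗[R] (H ⊗[R] H)) := (i12 R H).toRingHom.toMonoidHom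
  let fi13 : (H ⊗[R] H) →* (H ⊗[R] (H ⊗[R] H)) := (i13 R H).toRingHom.toMonoidHom
  let fi23 : (H ⊗[R] H) →* (H ⊗[R] (H ⊗[R] H)) := (i23 R H).toRingHom.toMonoidHom
  let fd12 : (H ⊗[R] H) →* (H ⊗[R] (H ⊗[R] H)) := (d12 R H).toRingHom.toMonoidHom
  let fd23 : (H ⊗[R] H) →* (H ⊗[R] (H ⊗[R] H)) := (d23 R H).toRingHom.toMonoidHom
  let fpC : (H ⊗[R] (H ⊗[R] H)) →* (H ⊗[R] (H ⊗[R] H)) :=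
    (pC R H).toAlgHom.toRingHom.toMonoidHom
  let fs23 : (H ⊗[R] (H ⊗[R] H)) →* (H ⊗[R] (H ⊗[R] H)) :=
    (s23 R H).toAlgHom.toRingHom.toMonoidHom
  let ftau : (H ⊗[R] H) →* (H ⊗[R] H) :=
    (Algebra.TensorProduct.comm R H H).toAlgHom.toRingHom.toMonoidHom
  -- units
  let uF : (H ⊗[R] H)ˣ := ⟨F, Finv, hFG, hGF⟩
  let uτF : (H ⊗[R] H)ˣ := Units.map ftau uF
  let uRu : (H ⊗[R] H)ˣ := uτF * uF⁻¹
  have uRudef : uRu = uτF * uF⁻¹ := rfl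
  have EUu : Units.map fi12 uF * Units.map fd12 uF
      = Units.map fi23 uF * Units.map fd23 uF := Units.ext EC
  have h1 : Units.map fpC (Units.map fi12 uF) = Units.map fi13 uτF := Units.ext (P1 F)
  have h2 : Units.map fpC (Units.map fi23 uF) = Units.map fi12 uF := Units.ext (P2 F)
  have h3 : Units.map fpC (Units.map fd23 uF) = Units.map fd12 uτF := Units.ext (P3 F)
  have h4 : Units.map fs23 (Units.map fi12 uF) = Units.map fi13 uF := Units.ext (S4 F)
  have h5 : Units.map fs23 (Units.map fi23 uF) = Units.map fi23 uτF := Units.ext (S5 F)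
  have h9 : Units.map fpC (Units.map fd12 uF) = Units.map fs23 (Units.map fd12 uF) :=
    Units.ext (C9 hcocomm F)
  have h10 : Units.map fs23 (Units.map fd23 uF) = Units.map fd23 uF :=
    Units.ext (C10 hcocomm F)
  have hP := congrArg (Units.map fpC) EUu
  rw [map_mul, map_mul, h1, h2, h3, h9] at hP
  have hS := congrArg (Units.map fs23) EUu
  rw [map_mul, map_mul, h4, h5, h10] at hS
  have key1 : Units.map fi12 uF * Units.map fd12 uτF =
      Units.map fi13 uτF *
        ((Units.map fi13 uF)⁻¹ * (Units.map fi23 uτF * Units.map fd23 uF)) := by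
    rw [← hS, ← hP]; group
  have hpre : Units.map fi12 uF * Units.map fd12 uτF *
        ((Units.map fi12 uF * Units.map fd12 uF)⁻¹) =
      (Units.map fi13 uτF * (Units.map fi13 uF)⁻¹) *
        (Units.map fi23 uτF * (Units.map fi23 uF)⁻¹) := by
    rw [key1, EUu]; group
  have e13 : Units.map fi13 uRu = Units.map fi13 uτF * (Units.map fi13 uF)⁻¹ := by
    rw [uRudef, map_mul, map_inv]
  have e23 : Units.map fi23 uRu = Units.map fi23 uτF * (Units.map fi23 uF)⁻¹ := by
    rw [uRudef, map_mul, map_inv]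
  have ed12 : Units.map fd12 uRu = Units.map fd12 uτF * (Units.map fd12 uF)⁻¹ := by
    rw [uRudef, map_mul, map_inv]
  have hpre2 : Units.map fi13 uRu * Units.map fi23 uRu =
      Units.map fi12 uF * Units.map fd12 uRu * (Units.map fi12 uF)⁻¹ := by
    rw [e13, e23, ed12, ← hpre]; group
  have Hex1v : i13 R H Rm * i23 R H Rm = i12 R H F * d12 R H Rm * i12 R H Finv :=
    congrArg Units.val hpre2
  have Hex1s : i23 R H Rm * i13 R H Rm =
      i12 R H (Algebra.TensorProduct.comm R H H F) * d12 R H Rm *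
        i12 R H (Algebra.TensorProduct.comm R H H Finv) := by
    have h := congrArg (s12 R H) Hex1v
    simp only [map_mul] at h
    rw [S7, S8, S6, C11 hcocomm, S6] at h
    exact h
  have hOp := OpL F Finv hGF Rm
  rw [← hRm] at hOp
  rw [mul_assoc, Hex1v, Hex1s]
  simpa only [mul_assoc] using hOp
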